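/- Let A ⊆ ℂ be a divergent strongly lacunary set, i.e., A∖{0} admits an injective enumeration (a_n)_{n∈ℕ} with |a_{n+1}/a_n| → ∞. Then A has the ESS property in (ℂ,+) with U_2 = {0}, U_k = ∅ for all k ≠ 2, and V_k = {0} for all k ≥ 1: for every k ≥ 1 there exists n_k ∈ ℕ such that for every r ∈ ℂ (with r ≠ 0 in the case k = 2), there are at most n_k tuples (a_1,…,a_k) ∈ (±A)^k satisfying a_1 + ⋯ + a_k = r and Σ_{i∈I} a_i ≠ 0 for every nonempty proper subset I ⊊ {1,…,k}. -/

import Mathlib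

open Finset Filter Pointwise

/-- The set of tuples `(a₁,…,a_k) ∈ (±A)^k` with `a₁ + ⋯ + a_k = r` and no proper
nonempty subsum lying in `V`. -/
def ESSsolSet {G : Type*} [AddCommGroup G] (A : Set G) (k : ℕ) (V : Set G) (r : G) :
    Set (Fin k → G) :=
  {t | (∀ i, t i ∈ A ∪ -A) ∧ (∑ i, t i) = r ∧
    ∀ I : Finset (Fin k), I.Nonempty → I ≠ Finset.univ → (∑ i ∈ I, t i) ∉ V}

namespace ESSaux

/-- Non-dependent version of `Fin.insertNth`, to keep elaboration simple. -/
def insF {k : ℕ} (i₀ : Fin (k + 1)) (v : ℂ) (u : Fin k → ℂ) : Fin (k + 1) → ℂ :=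
  i₀.insertNth v u

/-- Tuples with entries of the form `± a n`, total sum `r`, and ALL nonempty
subsums (including the full one) nonzero. -/
def Sol (a : ℕ → ℂ) (k : ℕ) (r : ℂ) : Set (Fin k → ℂ) :=
  {t | (∀ i, ∃ n, t i = a n ∨ t i = - a n) ∧ (∑ i, t i) = r ∧
    ∀ I : Finset (Fin k), I.Nonempty → (∑ i ∈ I, t i) ≠ 0}

/-- The lacunary growth property: beyond some index `N`, each `|a m|` dominates
`K` times every earlier `|a n|`. -/
lemma grow (a : ℕ → ℂ) (ha0 : ∀ n, a n ≠ 0)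
    (hg : Tendsto (fun n => ‖a (n + 1) / a n‖) atTop atTop) (K : ℝ) :
    ∃ N : ℕ, ∀ m n : ℕ, N < m → n < m →
      K * ‖a n‖ < ‖a m‖ := by
  set L : ℝ := max K 1 with hL
  have hL1 : (1:ℝ) ≤ L := le_max_right _ _
  have habs : ∀ n, 0 < ‖a n‖ := fun n => by
    simpa [norm_pos_iff] using ha0 n
  obtain ⟨N₀, hN₀⟩ := eventually_atTop.mp (hg.eventually_ge_atTop (L + 1))
  have hstep : ∀ n, N₀ ≤ n → (L + 1) * ‖a n‖ ≤ ‖a (n + 1)‖ := by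
    intro n hn
    have h := hN₀ n hn
    rw [norm_div] at h
    exact (le_div_iff₀ (habs n)).mp h
  have hchain : ∀ n, N₀ ≤ n → ∀ m, n < m →
      (L + 1) * ‖a n‖ ≤ ‖a m‖ := by
    intro n hn m
    induction m with
    | zero => omega
    | succ m ih =>
      intro hm
      rcases Nat.lt_or_ge n m with h | h
      · have h1 := ih h
        have h2 : ‖a m‖ ≤ ‖a (m + 1)‖ := by
          have := hstep m (by omega)
          nlinarith [habs m]
        linarith
      · have : n = m := by omega
        subst this
        exact hstep n hn
  have hpow : ∀ j : ℕ, (2:ℝ) ^ j * ‖a N₀‖ ≤ ‖a (N₀ + j)‖ := by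
    intro j
    induction j with
    | zero => simp
    | succ j ih =>
      have h1 : (L + 1) * ‖a (N₀ + j)‖ ≤ ‖a (N₀ + (j + 1))‖ := by
        have := hstep (N₀ + j) (by omega)
        simpa [Nat.add_assoc] using this
      calc (2:ℝ) ^ (j + 1) * ‖a N₀‖
          = 2 * ((2:ℝ) ^ j * ‖a N₀‖) := by ring
        _ ≤ 2 * ‖a (N₀ + j)‖ := by nlinarith
        _ ≤ ‖a (N₀ + (j + 1))‖ := by nlinarith [habs (N₀ + j)]
  set C : ℝ := (Finset.range (N₀ + 1)).sup' (by simp) (fun n => ‖a n‖) with hC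
  have hCle : ∀ n, n ≤ N₀ → ‖a n‖ ≤ C := by
    intro n hn
    exact Finset.le_sup' (fun n => ‖a n‖) (Finset.mem_range.mpr (by omega))
  obtain ⟨j, hj⟩ := pow_unbounded_of_one_lt (L * C / ‖a N₀‖)
    (by norm_num : (1:ℝ) < 2)
  have hjC : L * C < 2 ^ j * ‖a N₀‖ := by
    rw [div_lt_iff₀ (habs N₀)] at hj
    linarith
  refine ⟨N₀ + j, fun m n hm hn => ?_⟩
  have hKL : K * ‖a n‖ ≤ L * ‖a n‖ := by
    have := (habs n).le
    nlinarith [le_max_left K 1]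
  refine lt_of_le_of_lt hKL ?_
  rcases Nat.lt_or_ge n N₀ with h | h
  · have h1 : L * ‖a n‖ ≤ L * C := by
      nlinarith [hCle n (by omega), habs n]
    have h2 : ‖a (N₀ + j)‖ ≤ ‖a m‖ := by
      rcases Nat.lt_or_ge (N₀ + j) m with h' | h'
      · have := hchain (N₀ + j) (by omega) m h'
        nlinarith [habs (N₀ + j)]
      · have : m = N₀ + j := by omega
        rw [this]
    calc L * ‖a n‖ ≤ L * C := h1
      _ < 2 ^ j * ‖a N₀‖ := hjC
      _ ≤ ‖a (N₀ + j)‖ := hpow j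
      _ ≤ ‖a m‖ := h2
  · have := hchain n h m hn
    nlinarith [habs n]

/-- Key coefficient bound: a nonzero sum of terms each equal to `± a m` has
absolute value at least `|a m|`. -/
lemma abs_le_subsum {a : ℕ → ℂ} {m : ℕ} (ham : a m ≠ 0) {κ : ℕ} (t : Fin κ → ℂ)
    (I : Finset (Fin κ)) (hI : ∀ i ∈ I, t i = a m ∨ t i = - a m)
    (hs : (∑ i ∈ I, t i) ≠ 0) :
    ‖a m‖ ≤ ‖∑ i ∈ I, t i‖ := by
  classical
  set c : ℤ := ∑ i ∈ I, (if t i = a m then 1 else -1) with hc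
  have hsc : (∑ i ∈ I, t i) = (c : ℂ) * a m := by
    rw [hc]
    push_cast
    rw [Finset.sum_mul]
    refine Finset.sum_congr rfl fun i hi => ?_
    rcases hI i hi with h | h
    · rw [if_pos h, one_mul, h]
    · rw [if_neg, neg_one_mul, h]
      intro hcon
      apply ham
      have h2 : a m = - a m := hcon.symm.trans h
      linear_combination (1/2 : ℂ) * h2
  have hc0 : (c : ℂ) ≠ 0 := fun h => hs (by rw [hsc, h, zero_mul])
  have hcz : c ≠ 0 := fun h => hc0 (by exact_mod_cast h)
  have h1c : (1:ℝ) ≤ ‖(c : ℂ)‖ := by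
    rw [Complex.norm_intCast]
    exact_mod_cast Int.one_le_abs hcz
  rw [hsc, norm_mul]
  nlinarith [norm_nonneg (a m)]

/-- A finite set of candidate "top indices" `m` for a given target `r`. -/
lemma Mset (a : ℕ → ℂ) (ha0 : ∀ n, a n ≠ 0) {K C : ℝ} (hC : 2 * C < K) {N : ℕ}
    (hN : ∀ m n : ℕ, N < m → n < m → K * ‖a n‖ < ‖a m‖)
    (r : ℂ) :
    ∃ M : Finset ℕ, M.card ≤ N + 2 ∧
      ∀ m, (m ≤ N ∨ (‖r‖ ≤ C * ‖a m‖ ∧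
        ‖a m‖ ≤ 2 * ‖r‖)) → m ∈ M := by
  have habs : ∀ n, 0 < ‖a n‖ := fun n => by
    simpa [norm_pos_iff] using ha0 n
  have key : ∀ m m' : ℕ, N < m → N < m' →
      (‖r‖ ≤ C * ‖a m‖ ∧ ‖a m‖ ≤ 2 * ‖r‖) →
      (‖r‖ ≤ C * ‖a m'‖ ∧ ‖a m'‖ ≤ 2 * ‖r‖) →
      ¬ (m < m') := by
    intro m m' hm hm' h1 h2 hlt
    have := hN m' m hm' hlt
    nlinarith [habs m, habs m']
  by_cases hb : ∃ m, N < m ∧ ‖r‖ ≤ C * ‖a m‖ ∧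
      ‖a m‖ ≤ 2 * ‖r‖
  · obtain ⟨m₀, hm₀N, hm₀⟩ := hb
    refine ⟨insert m₀ (Finset.range (N + 1)), ?_, ?_⟩
    · calc (insert m₀ (Finset.range (N + 1))).card ≤ (Finset.range (N + 1)).card + 1 :=
          Finset.card_insert_le _ _
        _ = N + 2 := by simp
    · intro m hm
      rcases Nat.lt_or_ge N m with hNm | hNm
      · rcases hm with hm | hm
        · omega
        · have : m = m₀ := by
            rcases lt_trichotomy m m₀ with h | h | h
            · exact absurd h (key m m₀ hNm hm₀N hm hm₀)
            · exact h
            · exact absurd h (key m₀ m hm₀N hNm hm₀ hm)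
          rw [this]
          exact Finset.mem_insert_self _ _
      · exact Finset.mem_insert_of_mem (Finset.mem_range.mpr (by omega))
  · refine ⟨Finset.range (N + 1), by simp, ?_⟩
    intro m hm
    rcases Nat.lt_or_ge N m with hNm | hNm
    · rcases hm with hm | hm
      · omega
      · exact absurd ⟨m, hNm, hm⟩ hb
    · exact Finset.mem_range.mpr (by omega)

set_option maxHeartbeats 1000000 in
/-- Main counting lemma, by induction on `k`: the number of tuples in `Sol a k r`
is bounded uniformly in `r`. -/
lemma solBound (a : ℕ → ℂ) (ha0 : ∀ n, a n ≠ 0)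
    (hg : Tendsto (fun n => ‖a (n + 1) / a n‖) atTop atTop) :
    ∀ k : ℕ, ∃ n : ℕ, ∀ r : ℂ, ∃ F : Finset (Fin k → ℂ),
      F.card ≤ n ∧ Sol a k r ⊆ ↑F := by
  classical
  have habs : ∀ n, 0 < ‖a n‖ := fun n => by
    simpa [norm_pos_iff] using ha0 n
  intro k
  induction k with
  | zero =>
    refine ⟨1, fun r => ⟨{fun _ => 0}, by simp, ?_⟩⟩
    intro t _
    simp only [Finset.coe_singleton, Set.mem_singleton_iff]
    funext i
    exact i.elim0
  | succ k ih =>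
    obtain ⟨np, hnp⟩ := ih
    choose Fp hFcard hFsub using hnp
    rcases Nat.eq_zero_or_pos k with hk0 | hkpos
    · subst hk0
      refine ⟨1, fun r => ⟨{fun _ => r}, by simp, ?_⟩⟩
      rintro t ⟨h1, h2, h3⟩
      simp only [Finset.coe_singleton, Set.mem_singleton_iff]
      funext i
      have hi : i = 0 := Fin.eq_zero i
      rw [hi, ← h2, Fin.sum_univ_one]
    · -- k + 1 ≥ 2
      obtain ⟨N, hN⟩ := grow a ha0 hg (4 * ((k:ℝ) + 1))
      have hCK : 2 * (((k:ℝ) + 1) + 1) < 4 * ((k:ℝ) + 1) := by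
        have : (1:ℝ) ≤ (k:ℝ) := by exact_mod_cast hkpos
        linarith
      refine ⟨(k + 1) * ((2 * (N + 2)) * np), fun r => ?_⟩
      obtain ⟨M, hMcard, hMmem⟩ := Mset a ha0 hCK hN r
      set V : Finset ℂ := M.image a ∪ M.image (fun m => - a m) with hV
      have hVcard : V.card ≤ 2 * (N + 2) := by
        calc V.card ≤ (M.image a).card + (M.image (fun m => - a m)).card :=
            Finset.card_union_le _ _
          _ ≤ M.card + M.card := add_le_add (Finset.card_image_le) (Finset.card_image_le)
          _ ≤ 2 * (N + 2) := by omega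
      set G : Fin (k + 1) → Finset (Fin (k + 1) → ℂ) := fun i₀ =>
        (V.erase r).biUnion fun v => (Fp (r - v)).image (insF i₀ v) with hG
      refine ⟨Finset.univ.biUnion G, ?_, ?_⟩
      · calc (Finset.univ.biUnion G).card
            ≤ ∑ i₀ : Fin (k + 1), (G i₀).card :=
            Finset.card_biUnion_le
          _ ≤ ∑ _i₀ : Fin (k + 1), (2 * (N + 2)) * np := by
            refine Finset.sum_le_sum fun i₀ _ => ?_
            rw [hG]
            calc ((V.erase r).biUnion fun v => (Fp (r - v)).image (insF i₀ v)).card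
                ≤ ∑ v ∈ V.erase r, ((Fp (r - v)).image (insF i₀ v)).card :=
                Finset.card_biUnion_le
              _ ≤ ∑ _v ∈ V.erase r, np :=
                Finset.sum_le_sum fun v _ => le_trans Finset.card_image_le (hFcard _)
              _ = (V.erase r).card * np := by rw [Finset.sum_const, smul_eq_mul]
              _ ≤ (2 * (N + 2)) * np := by
                have h1 : (V.erase r).card ≤ V.card := Finset.card_erase_le
                exact Nat.mul_le_mul_right np (le_trans h1 hVcard)
          _ = (k + 1) * ((2 * (N + 2)) * np) := by
            rw [Finset.sum_const, smul_eq_mul, Finset.card_univ, Fintype.card_fin]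
      · rintro t ⟨h1, h2, h3⟩
        choose idx hidx using h1
        obtain ⟨i₀, -, hi₀⟩ := Finset.exists_max_image Finset.univ idx ⟨0, Finset.mem_univ _⟩
        set m := idx i₀ with hm
        have habsT : ∀ i, ‖t i‖ = ‖a (idx i)‖ := by
          intro i
          rcases hidx i with h | h <;> simp [h]
        -- the top index lies in M
        have hmM : m ∈ M := by
          apply hMmem
          by_cases hmN : m ≤ N
          · exact Or.inl hmN
          · right
            have hNm : N < m := by omega
            set I : Finset (Fin (k + 1)) :=
              Finset.univ.filter (fun i => idx i = m) with hIdef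
            set Ic : Finset (Fin (k + 1)) :=
              Finset.univ.filter (fun i => ¬ idx i = m) with hIcdef
            have hi₀I : i₀ ∈ I := Finset.mem_filter.mpr ⟨Finset.mem_univ _, rfl⟩
            have hs0 : (∑ i ∈ I, t i) ≠ 0 := h3 I ⟨i₀, hi₀I⟩
            have hIsigns : ∀ i ∈ I, t i = a m ∨ t i = - a m := by
              intro i hi
              have h' := (Finset.mem_filter.mp hi).2
              rw [← h']
              exact hidx i
            have hlb : ‖a m‖ ≤ ‖∑ i ∈ I, t i‖ :=
              abs_le_subsum (ha0 m) t I hIsigns hs0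
            have hub : ‖∑ i ∈ I, t i‖ ≤ ((k:ℝ) + 1) * ‖a m‖ := by
              calc ‖∑ i ∈ I, t i‖ ≤ ∑ i ∈ I, ‖t i‖ :=
                  norm_sum_le _ _
                _ ≤ I.card • ‖a m‖ := by
                  refine Finset.sum_le_card_nsmul _ _ _ fun i hi => ?_
                  rw [habsT i, (Finset.mem_filter.mp hi).2]
                _ ≤ ((k:ℝ) + 1) * ‖a m‖ := by
                  rw [nsmul_eq_mul]
                  have hcard : I.card ≤ k + 1 := by
                    have := Finset.card_le_univ I
                    simpa using this
                  have hcR : (I.card : ℝ) ≤ (k:ℝ) + 1 := by exact_mod_cast hcard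
                  nlinarith [habs m]
            have htail : ‖∑ i ∈ Ic, t i‖ ≤ ‖a m‖ / 4 := by
              have hbound : ∀ i ∈ Ic, ‖t i‖ ≤
                  ‖a m‖ / (4 * ((k:ℝ) + 1)) := by
                intro i hi
                have hne := (Finset.mem_filter.mp hi).2
                have hlt : idx i < m := lt_of_le_of_ne (hi₀ i (Finset.mem_univ i)) hne
                have hgr := hN m (idx i) hNm hlt
                rw [habsT i, le_div_iff₀ (by positivity)]
                nlinarith
              calc ‖∑ i ∈ Ic, t i‖ ≤ ∑ i ∈ Ic, ‖t i‖ :=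
                  norm_sum_le _ _
                _ ≤ Ic.card • (‖a m‖ / (4 * ((k:ℝ) + 1))) :=
                  Finset.sum_le_card_nsmul _ _ _ hbound
                _ ≤ ‖a m‖ / 4 := by
                  rw [nsmul_eq_mul]
                  have hcard : Ic.card ≤ k + 1 := by
                    have := Finset.card_le_univ Ic
                    simpa using this
                  have hc1 : (Ic.card : ℝ) ≤ (k:ℝ) + 1 := by exact_mod_cast hcard
                  have hc3 : (0:ℝ) ≤ ‖a m‖ / (4 * ((k:ℝ) + 1)) := by positivity
                  calc (Ic.card : ℝ) * (‖a m‖ / (4 * ((k:ℝ) + 1)))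
                      ≤ ((k:ℝ) + 1) * (‖a m‖ / (4 * ((k:ℝ) + 1))) := by
                        nlinarith
                    _ = ‖a m‖ / 4 := by
                      field_simp
            have hsplit : (∑ i ∈ I, t i) + (∑ i ∈ Ic, t i) = r := by
              rw [hIdef, hIcdef, Finset.sum_filter_add_sum_filter_not]
              exact h2
            have hRub : ‖r‖ ≤
                ‖∑ i ∈ I, t i‖ + ‖∑ i ∈ Ic, t i‖ := by
              rw [← hsplit]
              exact norm_add_le _ _
            have hRlb : ‖∑ i ∈ I, t i‖ ≤
                ‖r‖ + ‖∑ i ∈ Ic, t i‖ := by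
              have heq : (∑ i ∈ I, t i) = r + -(∑ i ∈ Ic, t i) := by
                rw [← hsplit]; ring
              rw [heq]
              calc ‖r + -(∑ i ∈ Ic, t i)‖
                  ≤ ‖r‖ + ‖-(∑ i ∈ Ic, t i)‖ := norm_add_le _ _
                _ = ‖r‖ + ‖∑ i ∈ Ic, t i‖ := by rw [norm_neg]
            constructor
            · linarith
            · linarith
        -- the value at the top position lies in V
        have hvV : t i₀ ∈ V := by
          rw [hV]
          rcases hidx i₀ with h | h
          · exact Finset.mem_union_left _ (Finset.mem_image.mpr ⟨m, hmM, h.symm⟩)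
          · exact Finset.mem_union_right _ (Finset.mem_image.mpr ⟨m, hmM, h.symm⟩)
        have herase : (∑ i ∈ Finset.univ.erase i₀, t i) ≠ 0 := by
          apply h3
          rw [← Finset.card_pos, Finset.card_erase_of_mem (Finset.mem_univ _),
            Finset.card_univ, Fintype.card_fin]
          omega
        have hsum_erase : t i₀ + (∑ i ∈ Finset.univ.erase i₀, t i) = r := by
          rw [Finset.add_sum_erase _ _ (Finset.mem_univ i₀)]
          exact h2
        have hvr : t i₀ ≠ r := by
          intro h
          apply herase
          rw [h] at hsum_erase
          linear_combination hsum_erase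
        -- the removed tuple is a smaller solution
        have hrem : i₀.removeNth t ∈ Sol a k (r - t i₀) := by
          refine ⟨fun j => ⟨idx (i₀.succAbove j), hidx (i₀.succAbove j)⟩, ?_, ?_⟩
          · have hsum := Fin.sum_univ_succAbove t i₀
            rw [h2] at hsum
            have : (∑ j : Fin k, t (i₀.succAbove j)) = r - t i₀ := by
              linear_combination -hsum
            simpa [Fin.removeNth] using this
          · intro J hJ
            have hmap : (∑ j ∈ J, i₀.removeNth t j) =
                ∑ i ∈ J.map i₀.succAboveEmb, t i := by
              rw [Finset.sum_map]
              rfl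
            rw [hmap]
            exact h3 _ (Finset.map_nonempty.mpr hJ)
        -- conclude membership
        apply Finset.mem_coe.mpr
        refine Finset.mem_biUnion.mpr ⟨i₀, Finset.mem_univ _, ?_⟩
        rw [hG]
        refine Finset.mem_biUnion.mpr ⟨t i₀, Finset.mem_erase.mpr ⟨hvr, hvV⟩, ?_⟩
        refine Finset.mem_image.mpr ⟨i₀.removeNth t, Finset.mem_coe.mp (hFsub _ hrem), ?_⟩
        exact Fin.insertNth_self_removeNth i₀ t

/-- In the case `r = 0` with `k ≥ 3`, all indices of a solution are bounded. -/
lemma zeroCase (a : ℕ → ℂ) (ha0 : ∀ n, a n ≠ 0) {k N : ℕ} (hk : 3 ≤ k)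
    (hN : ∀ m n : ℕ, N < m → n < m →
      (2 * (k:ℝ)) * ‖a n‖ < ‖a m‖)
    (t : Fin k → ℂ) (h1 : ∀ i, ∃ n, t i = a n ∨ t i = - a n)
    (h2 : (∑ i, t i) = 0)
    (h3 : ∀ I : Finset (Fin k), I.Nonempty → I ≠ Finset.univ → (∑ i ∈ I, t i) ≠ 0) :
    ∀ i, ∃ n, n ≤ N ∧ (t i = a n ∨ t i = - a n) := by
  classical
  have habs : ∀ n, 0 < ‖a n‖ := fun n => by
    simpa [norm_pos_iff] using ha0 n
  have hkpos : 0 < k := by omega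
  haveI : Nonempty (Fin k) := ⟨⟨0, hkpos⟩⟩
  choose idx hidx using h1
  obtain ⟨i₀, -, hi₀⟩ := Finset.exists_max_image Finset.univ idx ⟨⟨0, hkpos⟩, Finset.mem_univ _⟩
  set m := idx i₀ with hm
  have habsT : ∀ i, ‖t i‖ = ‖a (idx i)‖ := by
    intro i
    rcases hidx i with h | h <;> simp [h]
  -- show m ≤ N
  have hmN : m ≤ N := by
    by_contra hmN
    have hNm : N < m := by omega
    set I : Finset (Fin k) := Finset.univ.filter (fun i => idx i = m) with hIdef
    set Ic : Finset (Fin k) := Finset.univ.filter (fun i => ¬ idx i = m) with hIcdef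
    have hi₀I : i₀ ∈ I := Finset.mem_filter.mpr ⟨Finset.mem_univ _, rfl⟩
    have hIsigns : ∀ i ∈ I, t i = a m ∨ t i = - a m := by
      intro i hi
      have h' := (Finset.mem_filter.mp hi).2
      rw [← h']
      exact hidx i
    by_cases hIu : I = Finset.univ
    · -- all entries are ± a m
      have hall : ∀ i, t i = a m ∨ t i = - a m := fun i =>
        hIsigns i (hIu ▸ Finset.mem_univ i)
      by_cases hplus : ∃ i, t i = a m
      · by_cases hminus : ∃ j, t j = - a m
        · obtain ⟨i, hi⟩ := hplus
          obtain ⟨j, hj⟩ := hminus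
          have hij : i ≠ j := by
            intro h
            rw [h, hj] at hi
            exact ha0 m (by linear_combination (-1/2 : ℂ) * hi)
          have hsub : (∑ x ∈ ({i, j} : Finset (Fin k)), t x) = 0 := by
            rw [Finset.sum_pair hij, hi, hj]
            ring
          refine h3 {i, j} ⟨i, Finset.mem_insert_self _ _⟩ ?_ hsub
          intro h
          have hcard := congrArg Finset.card h
          rw [Finset.card_univ, Fintype.card_fin] at hcard
          have : ({i, j} : Finset (Fin k)).card ≤ 2 := by
            calc ({i, j} : Finset (Fin k)).card ≤ ({j} : Finset (Fin k)).card + 1 :=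
              Finset.card_insert_le _ _
            _ = 2 := by simp
          omega
        · -- all entries equal a m
          push_neg at hminus
          have hall' : ∀ i, t i = a m := by
            intro i
            rcases hall i with h | h
            · exact h
            · exact absurd h (hminus i)
          have : (∑ i : Fin k, t i) = (k : ℂ) * a m := by
            rw [Finset.sum_congr rfl (fun i _ => hall' i), Finset.sum_const,
              Finset.card_univ, Fintype.card_fin, nsmul_eq_mul]
          rw [h2] at this
          have hk0 : (k : ℂ) ≠ 0 := by
            exact_mod_cast (by omega : k ≠ 0)
          exact ha0 m (by
            rcases mul_eq_zero.mp this.symm with h | h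
            · exact absurd h hk0
            · exact h)
      · -- all entries equal - a m
        push_neg at hplus
        have hall' : ∀ i, t i = - a m := by
          intro i
          rcases hall i with h | h
          · exact absurd h (hplus i)
          · exact h
        have : (∑ i : Fin k, t i) = (k : ℂ) * (- a m) := by
          rw [Finset.sum_congr rfl (fun i _ => hall' i), Finset.sum_const,
            Finset.card_univ, Fintype.card_fin, nsmul_eq_mul]
        rw [h2] at this
        have hk0 : (k : ℂ) ≠ 0 := by
          exact_mod_cast (by omega : k ≠ 0)
        refine ha0 m ?_
        rcases mul_eq_zero.mp this.symm with h | h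
        · exact absurd h hk0
        · linear_combination -h
    · -- I is a proper nonempty subset
      have hs0 : (∑ i ∈ I, t i) ≠ 0 := h3 I ⟨i₀, hi₀I⟩ hIu
      have hlb : ‖a m‖ ≤ ‖∑ i ∈ I, t i‖ :=
        abs_le_subsum (ha0 m) t I hIsigns hs0
      have htail : ‖∑ i ∈ Ic, t i‖ ≤ ‖a m‖ / 2 := by
        have hbound : ∀ i ∈ Ic, ‖t i‖ ≤
            ‖a m‖ / (2 * (k:ℝ)) := by
          intro i hi
          have hne := (Finset.mem_filter.mp hi).2
          have hlt : idx i < m := lt_of_le_of_ne (hi₀ i (Finset.mem_univ i)) hne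
          have hgr := hN m (idx i) hNm hlt
          have hkR : (0:ℝ) < (k:ℝ) := by exact_mod_cast hkpos
          rw [habsT i, le_div_iff₀ (by positivity)]
          nlinarith
        calc ‖∑ i ∈ Ic, t i‖ ≤ ∑ i ∈ Ic, ‖t i‖ :=
            norm_sum_le _ _
          _ ≤ Ic.card • (‖a m‖ / (2 * (k:ℝ))) :=
            Finset.sum_le_card_nsmul _ _ _ hbound
          _ ≤ ‖a m‖ / 2 := by
            rw [nsmul_eq_mul]
            have hcard : Ic.card ≤ k := by
              have := Finset.card_le_univ Ic
              simpa using this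
            have hc1 : (Ic.card : ℝ) ≤ (k:ℝ) := by exact_mod_cast hcard
            have hkR : (0:ℝ) < (k:ℝ) := by exact_mod_cast hkpos
            have hc3 : (0:ℝ) ≤ ‖a m‖ / (2 * (k:ℝ)) := by positivity
            calc (Ic.card : ℝ) * (‖a m‖ / (2 * (k:ℝ)))
                ≤ (k:ℝ) * (‖a m‖ / (2 * (k:ℝ))) := by nlinarith
              _ = ‖a m‖ / 2 := by
                field_simp
      have hsplit : (∑ i ∈ I, t i) + (∑ i ∈ Ic, t i) = 0 := by
        rw [hIdef, hIcdef, Finset.sum_filter_add_sum_filter_not]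
        exact h2
      have heq : (∑ i ∈ I, t i) = -(∑ i ∈ Ic, t i) := by
        linear_combination hsplit
      have : ‖∑ i ∈ I, t i‖ = ‖∑ i ∈ Ic, t i‖ := by
        rw [heq, norm_neg]
      nlinarith [habs m]
  intro i
  exact ⟨idx i, le_trans (hi₀ i (Finset.mem_univ i)) hmN, hidx i⟩

end ESSaux

/-- Example (2) after Theorem 6.9. A divergent strongly lacunary set
`A ⊆ ℂ` has the ESS property in `(ℂ,+)` with `U₂ = {0}`, `U_k = ∅` for `k ≠ 2`, and
`V_k = {0}` for all `k`. -/
theorem divergent_lacunary_ESS_property (A : Set ℂ)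
    (hlac : ∃ a : ℕ → ℂ, Function.Injective a ∧ Set.range a = A \ {0} ∧
      Tendsto (fun n => ‖a (n + 1) / a n‖) atTop atTop) :
    ∀ k : ℕ, 1 ≤ k → ∃ n : ℕ, ∀ r : ℂ, (k = 2 → r ≠ 0) →
      (ESSsolSet A k {0} r).Finite ∧ (ESSsolSet A k {0} r).ncard ≤ n := by
  classical
  obtain ⟨a, hainj, hA, hg⟩ := hlac
  have ha0 : ∀ n, a n ≠ 0 := by
    intro n
    have h : a n ∈ A \ {0} := hA ▸ Set.mem_range_self n
    simpa using h.2
  intro k hk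
  obtain ⟨nL, hnL⟩ := ESSaux.solBound a ha0 hg k
  obtain ⟨Nz, hNz⟩ := ESSaux.grow a ha0 hg (2 * (k:ℝ))
  set Vz : Finset ℂ :=
    (Finset.range (Nz + 1)).image a ∪ (Finset.range (Nz + 1)).image (fun n => - a n)
      with hVz
  set Fz : Finset (Fin k → ℂ) := Fintype.piFinset (fun _ => Vz) with hFz
  refine ⟨max (max nL 1) Fz.card, fun r hr => ?_⟩
  suffices h : ∃ F : Finset (Fin k → ℂ), ESSsolSet A k {0} r ⊆ ↑F ∧
      F.card ≤ max (max nL 1) Fz.card by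
    obtain ⟨F, hsub, hcard⟩ := h
    refine ⟨Set.Finite.subset F.finite_toSet hsub, ?_⟩
    calc (ESSsolSet A k {0} r).ncard ≤ (↑F : Set (Fin k → ℂ)).ncard :=
        Set.ncard_le_ncard hsub F.finite_toSet
      _ = F.card := Set.ncard_coe_finset F
      _ ≤ max (max nL 1) Fz.card := hcard
  -- entries of solutions are of the form ± a n, provided they are nonzero
  have hentry : ∀ x : ℂ, x ∈ A ∪ -A → x ≠ 0 → ∃ n, x = a n ∨ x = - a n := by
    intro x hx hx0
    rcases hx with hx | hx
    · have : x ∈ Set.range a := by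
        rw [hA]
        exact ⟨hx, by simpa using hx0⟩
      obtain ⟨n, hn⟩ := this
      exact ⟨n, Or.inl hn.symm⟩
    · have hx' : -x ∈ A := Set.mem_neg.mp hx
      have : -x ∈ Set.range a := by
        rw [hA]
        exact ⟨hx', by simpa using hx0⟩
      obtain ⟨n, hn⟩ := this
      refine ⟨n, Or.inr ?_⟩
      linear_combination hn
  by_cases hk1 : k = 1
  · subst hk1
    refine ⟨{fun _ => r}, ?_, le_trans (by simp) (le_max_left _ _)⟩
    rintro t ⟨h1, h2, h3⟩
    simp only [Finset.coe_singleton, Set.mem_singleton_iff]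
    funext i
    have hi : i = 0 := Fin.eq_zero i
    rw [hi, ← h2, Fin.sum_univ_one]
  · -- k ≥ 2
    have hk2 : 2 ≤ k := by omega
    have hsingle : ∀ (t : Fin k → ℂ),
        (∀ I : Finset (Fin k), I.Nonempty → I ≠ Finset.univ →
          (∑ i ∈ I, t i) ∉ ({0} : Set ℂ)) → ∀ i, t i ≠ 0 := by
      intro t h3 i
      have hne : ({i} : Finset (Fin k)) ≠ Finset.univ := by
        intro h
        have hcard := congrArg Finset.card h
        rw [Finset.card_univ, Fintype.card_fin, Finset.card_singleton] at hcard
        omega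
      have := h3 {i} (Finset.singleton_nonempty i) hne
      simpa using this
    by_cases hr0 : r = 0
    · -- then k ≠ 2, so k ≥ 3
      have hk3 : 3 ≤ k := by
        have : k ≠ 2 := fun h => hr h hr0
        omega
      subst hr0
      refine ⟨Fz, ?_, le_max_right _ _⟩
      rintro t ⟨h1, h2, h3⟩
      have h1' : ∀ i, ∃ n, t i = a n ∨ t i = - a n := fun i =>
        hentry (t i) (h1 i) (hsingle t h3 i)
      have hbd := ESSaux.zeroCase a ha0 hk3 hNz t h1' h2 h3
      apply Finset.mem_coe.mpr
      rw [hFz]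
      refine Fintype.mem_piFinset.mpr fun i => ?_
      obtain ⟨n, hn, hsig⟩ := hbd i
      rw [hVz]
      rcases hsig with h | h
      · exact Finset.mem_union_left _
          (Finset.mem_image.mpr ⟨n, Finset.mem_range.mpr (by omega), h.symm⟩)
      · exact Finset.mem_union_right _
          (Finset.mem_image.mpr ⟨n, Finset.mem_range.mpr (by omega), by rw [h]⟩)
    · -- r ≠ 0
      obtain ⟨F, hFc, hFs⟩ := hnL r
      refine ⟨F, ?_, le_trans hFc (le_trans (le_max_left _ _) (le_max_left _ _))⟩
      rintro t ⟨h1, h2, h3⟩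
      apply hFs
      refine ⟨fun i => hentry (t i) (h1 i) (hsingle t h3 i), h2, ?_⟩
      intro I hI
      by_cases hIu : I = Finset.univ
      · rw [hIu]
        simpa [h2] using hr0
      · have := h3 I hI hIu
        simpa using this
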